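/- arXiv:2112.15297 — 2 statements merged into one kernel-verified Lean document; each statement's English description precedes it below -/
import Mathlib

section
/- Let G be a finite simple graph containing two edges {u,w}, {v,w} ∈ E(G) with deg(u) = deg(v) = 1. Then min-match(G∖v) = min-match(G), where G∖v is the induced subgraph of G on V(G)∖{v}. -/
namespace MatchingPaper

variable {V : Type*}

/-- `M` is a matching of `G` : a finite set of edges of `G` that are pairwise disjoint. -/
def IsMatching (G : SimpleGraph V) (M : Finset (Sym2 V)) : Prop :=
  (↑M : Set (Sym2 V)) ⊆ G.edgeSet ∧
    ∀ e ∈ M, ∀ f ∈ M, e ≠ f → ∀ v : V, v ∈ e → v ∉ f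

open Classical in
/-- `M` is a maximal matching of `G` : adding any further edge of `G` destroys
the matching property. -/
def IsMaximalMatching (G : SimpleGraph V) (M : Finset (Sym2 V)) : Prop :=
  IsMatching G M ∧ ∀ e ∈ G.edgeSet, e ∉ M → ¬ IsMatching G (insert e M)

/-- `M` is an induced matching of `G` : a matching such that no edge of `G`
meets two distinct edges of `M`. -/
def IsInducedMatching (G : SimpleGraph V) (M : Finset (Sym2 V)) : Prop :=
  IsMatching G M ∧
    ∀ e ∈ M, ∀ f ∈ M, e ≠ f → ∀ g ∈ G.edgeSet,
      (∃ v : V, v ∈ g ∧ v ∈ e) → ¬ ∃ v : V, v ∈ g ∧ v ∈ f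

/-- The matching number `match(G)` : the maximum size of a matching of `G`. -/
noncomputable def matchNum (G : SimpleGraph V) : ℕ :=
  sSup {n : ℕ | ∃ M : Finset (Sym2 V), IsMatching G M ∧ M.card = n}

/-- The minimum matching number `min-match(G)` : the minimum size of a maximal
matching of `G`. -/
noncomputable def minMatchNum (G : SimpleGraph V) : ℕ :=
  sInf {n : ℕ | ∃ M : Finset (Sym2 V), IsMaximalMatching G M ∧ M.card = n}

/-- The induced matching number `ind-match(G)` : the maximum size of an induced
matching of `G`. -/
noncomputable def indMatchNum (G : SimpleGraph V) : ℕ :=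
  sSup {n : ℕ | ∃ M : Finset (Sym2 V), IsInducedMatching G M ∧ M.card = n}

lemma isMatching_empty (G : SimpleGraph V) : IsMatching G ∅ :=
  ⟨by simp, by simp⟩

lemma exists_isMaximalMatching [Fintype V] (G : SimpleGraph V) :
    ∃ M, IsMaximalMatching G M := by
  classical
  obtain ⟨M, hMmem, hmax⟩ := Finset.exists_max_image
    (Finset.univ.filter fun M : Finset (Sym2 V) => IsMatching G M) Finset.card
    ⟨∅, by simp [isMatching_empty]⟩
  refine ⟨M, (Finset.mem_filter.mp hMmem).2, fun e he heM hins => ?_⟩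
  have := hmax _ (Finset.mem_filter.mpr ⟨Finset.mem_univ _, hins⟩)
  rw [Finset.card_insert_of_notMem heM] at this
  omega

lemma eq_of_adj_of_degree_one [Fintype V] (G : SimpleGraph V) [DecidableRel G.Adj]
    {v w : V} (h : G.Adj v w) (hd : G.degree v = 1) :
    ∀ x, G.Adj v x → x = w := by
  intro x hx
  have hle : (G.neighborFinset v).card ≤ 1 := le_of_eq hd
  exact Finset.card_le_one.mp hle x ((G.mem_neighborFinset v x).mpr hx) w
    ((G.mem_neighborFinset v w).mpr h)

theorem minMatchNum_delete_twin_leaf {V : Type*} [Fintype V] (G : SimpleGraph V)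
    [DecidableRel G.Adj] (u v w : V) (huv : u ≠ v)
    (huw : G.Adj u w) (hvw : G.Adj v w)
    (hdu : G.degree u = 1) (hdv : G.degree v = 1) :
    minMatchNum (G.induce ({v}ᶜ : Set V)) = minMatchNum G := by
  letI idV : DecidableEq V := fun a b => Classical.propDecidable _
  set s : Set V := ({v}ᶜ : Set V) with hs
  letI idS : DecidableEq ↥s := fun a b => Classical.propDecidable _
  set G' := G.induce s with hG'
  haveI : Fintype ↥s := Fintype.ofFinite ↥s
  have hvnw : v ≠ w := G.ne_of_adj hvw
  have hunw : u ≠ w := G.ne_of_adj huw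
  have hw : w ∈ s := by simp [hs]; exact hvnw.symm
  have hu : u ∈ s := by simp [hs]; exact huv
  set wS : ↥s := ⟨w, hw⟩ with hwS
  set uS : ↥s := ⟨u, hu⟩ with huS
  set F : Sym2 ↥s → Sym2 V := Sym2.map Subtype.val with hF
  have hFinj : Function.Injective F := Sym2.map.injective Subtype.val_injective
  have hvnbr : ∀ x, G.Adj v x → x = w := eq_of_adj_of_degree_one G hvw hdv
  have hunbr : ∀ x, G.Adj u x → x = w := eq_of_adj_of_degree_one G huw hdu
  have hedge : ∀ e : Sym2 ↥s, e ∈ G'.edgeSet ↔ F e ∈ G.edgeSet := by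
    intro e
    induction e using Sym2.ind with
    | _ a b => simp [hF, hG', Sym2.map_pair_eq]
  have hmemF : ∀ (x : ↥s) (e : Sym2 ↥s), x ∈ e ↔ (x : V) ∈ F e := by
    intro x e
    constructor
    · intro hx; exact Sym2.mem_map.mpr ⟨x, hx, rfl⟩
    · intro hx
      obtain ⟨y, hy, hyx⟩ := Sym2.mem_map.mp hx
      rwa [Subtype.val_injective hyx] at hy
  have hmatch_iff : ∀ M' : Finset (Sym2 ↥s),
      IsMatching G' M' ↔ IsMatching G (M'.image F) := by
    intro M'
    constructor
    · rintro ⟨hsub, hdisj⟩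
      constructor
      · intro e he
        simp only [Finset.coe_image, Set.mem_image, Finset.mem_coe] at he
        obtain ⟨e', he', rfl⟩ := he
        exact (hedge e').mp (hsub he')
      · intro e he f hf hef x hxe hxf
        obtain ⟨e', he', rfl⟩ := Finset.mem_image.mp he
        obtain ⟨f', hf', rfl⟩ := Finset.mem_image.mp hf
        obtain ⟨y, hy, rfl⟩ := Sym2.mem_map.mp hxe
        obtain ⟨z, hz, hzy⟩ := Sym2.mem_map.mp hxf
        have hzyy : z = y := Subtype.val_injective hzy
        exact hdisj e' he' f' hf' (fun h => hef (by rw [h])) y hy (hzyy ▸ hz)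
    · rintro ⟨hsub, hdisj⟩
      constructor
      · intro e' he'
        exact (hedge e').mpr (hsub (Finset.mem_coe.mpr
          (Finset.mem_image_of_mem F (Finset.mem_coe.mp he'))))
      · intro e' he' f' hf' hef x hx hxf
        exact hdisj (F e') (Finset.mem_image_of_mem F he') (F f')
          (Finset.mem_image_of_mem F hf') (fun h => hef (hFinj h)) x.val
          ((hmemF x e').mp hx) ((hmemF x f').mp hxf)
  -- every maximal matching of G' covers wS
  have hcovG' : ∀ M', IsMaximalMatching G' M' → ∃ e ∈ M', wS ∈ e := by
    rintro M' ⟨hM', hmax⟩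
    by_contra hno
    push_neg at hno
    have hnou : ∀ e ∈ M', uS ∉ e := by
      intro e he hmem
      obtain ⟨b, rfl⟩ := Sym2.mem_iff_exists.mp hmem
      have hadj : G'.Adj uS b := (SimpleGraph.mem_edgeSet G').mp (hM'.1 he)
      have hbv : (b : V) = w := hunbr b hadj
      have hbw : b = wS := Subtype.ext hbv
      subst hbw
      exact hno _ he (by simp)
    have huwE : s(uS, wS) ∈ G'.edgeSet := by
      rw [SimpleGraph.mem_edgeSet]
      exact huw
    have hnotmem : s(uS, wS) ∉ M' := fun h => hno _ h (by simp)
    apply hmax _ huwE hnotmem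
    constructor
    · intro e he
      rcases Finset.mem_insert.mp (Finset.mem_coe.mp he) with rfl | h
      · exact huwE
      · exact hM'.1 (Finset.mem_coe.mpr h)
    · intro e he f hf hef x hxe hxf
      rcases Finset.mem_insert.mp he with rfl | he2
      · rcases Finset.mem_insert.mp hf with rfl | hf2
        · exact hef rfl
        · rcases Sym2.mem_iff.mp hxe with rfl | rfl
          · exact hnou f hf2 hxf
          · exact hno f hf2 hxf
      · rcases Finset.mem_insert.mp hf with rfl | hf2
        · rcases Sym2.mem_iff.mp hxf with rfl | rfl
          · exact hnou e he2 hxe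
          · exact hno e he2 hxe
        · exact hM'.2 e he2 f hf2 hef x hxe hxf
  -- every maximal matching of G covers w
  have hcovG : ∀ M, IsMaximalMatching G M → ∃ e ∈ M, w ∈ e := by
    rintro M ⟨hM, hmax⟩
    by_contra hno
    push_neg at hno
    have hnov : ∀ e ∈ M, v ∉ e := by
      intro e he hmem
      obtain ⟨b, rfl⟩ := Sym2.mem_iff_exists.mp hmem
      have hbv : b = w := hvnbr b ((SimpleGraph.mem_edgeSet G).mp (hM.1 he))
      exact hno _ he (by rw [hbv]; simp)
    have hvwE : s(v, w) ∈ G.edgeSet := (SimpleGraph.mem_edgeSet G).mpr hvw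
    have hnotmem : s(v, w) ∉ M := fun h => hno _ h (by simp)
    apply hmax _ hvwE hnotmem
    constructor
    · intro e he
      rcases Finset.mem_insert.mp (Finset.mem_coe.mp he) with rfl | h
      · exact hvwE
      · exact hM.1 (Finset.mem_coe.mpr h)
    · intro e he f hf hef x hxe hxf
      rcases Finset.mem_insert.mp he with rfl | he2
      · rcases Finset.mem_insert.mp hf with rfl | hf2
        · exact hef rfl
        · rcases Sym2.mem_iff.mp hxe with rfl | rfl
          · exact hnov f hf2 hxf
          · exact hno f hf2 hxf
      · rcases Finset.mem_insert.mp hf with rfl | hf2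
        · rcases Sym2.mem_iff.mp hxf with rfl | rfl
          · exact hnov e he2 hxe
          · exact hno e he2 hxe
        · exact hM.2 e he2 f hf2 hef x hxe hxf
  -- image of a maximal matching of G' is maximal in G
  have hmaxF : ∀ M', IsMaximalMatching G' M' → IsMaximalMatching G (M'.image F) := by
    intro M' hM'
    obtain ⟨e₀, he₀, hwe₀⟩ := hcovG' M' hM'
    have hwcov : w ∈ F e₀ := (hmemF wS e₀).mp hwe₀
    have hFe₀ : F e₀ ∈ M'.image F := Finset.mem_image_of_mem F he₀
    refine ⟨(hmatch_iff M').mp hM'.1, ?_⟩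
    intro g hg hgM hins
    induction g using Sym2.ind with
    | _ a b =>
    have hg' : G.Adj a b := (SimpleGraph.mem_edgeSet G).mp hg
    have hna : a ≠ v := by
      intro h
      have hg2 : G.Adj v b := by rw [← h]; exact hg'
      have hb : b = w := hvnbr b hg2
      exact hins.2 _ (Finset.mem_insert_self _ _) (F e₀) (Finset.mem_insert_of_mem hFe₀)
        (fun hh => hgM (hh ▸ hFe₀)) w (by rw [hb]; simp) hwcov
    have hnb : b ≠ v := by
      intro h
      have hg2 : G.Adj v a := by rw [← h]; exact hg'.symm
      have ha : a = w := hvnbr a hg2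
      exact hins.2 _ (Finset.mem_insert_self _ _) (F e₀) (Finset.mem_insert_of_mem hFe₀)
        (fun hh => hgM (hh ▸ hFe₀)) w (by rw [ha]; simp) hwcov
    have has : a ∈ s := by simp [hs]; exact hna
    have hbs : b ∈ s := by simp [hs]; exact hnb
    set g' : Sym2 ↥s := s(⟨a, has⟩, ⟨b, hbs⟩) with hg'def
    have hFg' : F g' = s(a, b) := by simp [hF, hg'def, Sym2.map_pair_eq]
    have hg'E : g' ∈ G'.edgeSet := (hedge g').mpr (by rw [hFg']; exact hg)
    have hg'M : g' ∉ M' := fun h => hgM (hFg' ▸ Finset.mem_image_of_mem F h)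
    refine hM'.2 g' hg'E hg'M ((hmatch_iff _).mpr ?_)
    rw [Finset.image_insert, hFg']
    exact hins
  have h1 : minMatchNum G ≤ minMatchNum G' := by
    have hne : {n : ℕ | ∃ M' : Finset (Sym2 ↥s),
        IsMaximalMatching G' M' ∧ M'.card = n}.Nonempty := by
      obtain ⟨M', hM'⟩ := exists_isMaximalMatching G'
      exact ⟨M'.card, M', hM', rfl⟩
    obtain ⟨M', hM', hcard⟩ := Nat.sInf_mem hne
    exact Nat.sInf_le ⟨M'.image F, hmaxF M' hM',
      by rw [Finset.card_image_of_injective _ hFinj, hcard]; rfl⟩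
  have h2 : minMatchNum G' ≤ minMatchNum G := by
    have hne : {n : ℕ | ∃ M : Finset (Sym2 V),
        IsMaximalMatching G M ∧ M.card = n}.Nonempty := by
      obtain ⟨M, hM⟩ := exists_isMaximalMatching G
      exact ⟨M.card, M, hM, rfl⟩
    obtain ⟨M, hM, hcard⟩ := Nat.sInf_mem hne
    -- build M₂ : maximal matching of G, same card, avoiding v
    obtain ⟨M₂, hM₂max, hM₂card, hM₂v⟩ :
        ∃ M₂, IsMaximalMatching G M₂ ∧ M₂.card = M.card ∧ ∀ e ∈ M₂, v ∉ e := by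
      by_cases hvwM : s(v, w) ∈ M
      · set N := M.erase s(v, w) with hN
        have hwN : ∀ f ∈ N, w ∉ f := by
          intro f hf
          exact hM.1.2 _ hvwM f (Finset.mem_of_mem_erase hf)
            (Finset.ne_of_mem_erase hf).symm w (by simp)
        have hvN : ∀ f ∈ N, v ∉ f := by
          intro f hf
          exact hM.1.2 _ hvwM f (Finset.mem_of_mem_erase hf)
            (Finset.ne_of_mem_erase hf).symm v (by simp)
        have huM : ∀ f ∈ M, u ∉ f := by
          intro f hf hmem
          obtain ⟨b, rfl⟩ := Sym2.mem_iff_exists.mp hmem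
          have hb : b = w := hunbr b ((SimpleGraph.mem_edgeSet G).mp (hM.1.1 hf))
          have hne : s(u, b) ≠ s(v, w) := by
            intro h
            rcases Sym2.eq_iff.mp h with ⟨h1, -⟩ | ⟨h1, -⟩
            · exact huv h1
            · exact hunw h1
          exact hwN _ (Finset.mem_erase.mpr ⟨hne, hf⟩) (by rw [hb]; simp)
        have huwN : s(u, w) ∉ N := fun h => huM _ (Finset.mem_of_mem_erase h) (by simp)
        refine ⟨insert s(u, w) N, ⟨⟨?_, ?_⟩, ?_⟩, ?_, ?_⟩
        · intro e he
          rcases Finset.mem_insert.mp (Finset.mem_coe.mp he) with rfl | h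
          · exact (SimpleGraph.mem_edgeSet G).mpr huw
          · exact hM.1.1 (Finset.mem_coe.mpr (Finset.mem_of_mem_erase h))
        · intro e he f hf hef x hxe hxf
          rcases Finset.mem_insert.mp he with rfl | he2
          · rcases Finset.mem_insert.mp hf with rfl | hf2
            · exact hef rfl
            · rcases Sym2.mem_iff.mp hxe with rfl | rfl
              · exact huM f (Finset.mem_of_mem_erase hf2) hxf
              · exact hwN f hf2 hxf
          · rcases Finset.mem_insert.mp hf with rfl | hf2
            · rcases Sym2.mem_iff.mp hxf with rfl | rfl
              · exact huM e (Finset.mem_of_mem_erase he2) hxe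
              · exact hwN e he2 hxe
            · exact hM.1.2 e (Finset.mem_of_mem_erase he2) f (Finset.mem_of_mem_erase hf2)
                hef x hxe hxf
        · -- maximality
          intro e he heM hins
          have hwe : w ∉ e := hins.2 s(u, w)
            (Finset.mem_insert_of_mem (Finset.mem_insert_self _ _)) e
            (Finset.mem_insert_self _ _)
            (fun h => heM (h ▸ Finset.mem_insert_self _ _)) w (by simp)
          have hue : u ∉ e := hins.2 s(u, w)
            (Finset.mem_insert_of_mem (Finset.mem_insert_self _ _)) e
            (Finset.mem_insert_self _ _)
            (fun h => heM (h ▸ Finset.mem_insert_self _ _)) u (by simp)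
          have hve : v ∉ e := by
            intro hmem
            obtain ⟨b, rfl⟩ := Sym2.mem_iff_exists.mp hmem
            have hb : b = w := hvnbr b ((SimpleGraph.mem_edgeSet G).mp he)
            exact hwe (by rw [hb]; simp)
          have heMM : e ∉ M := by
            intro heMM
            have hene : e ≠ s(v, w) := fun h => hwe (by rw [h]; simp)
            exact heM (Finset.mem_insert_of_mem (Finset.mem_erase.mpr ⟨hene, heMM⟩))
          apply hM.2 e he heMM
          constructor
          · intro f hf
            rcases Finset.mem_insert.mp (Finset.mem_coe.mp hf) with rfl | h
            · exact he
            · exact hM.1.1 (Finset.mem_coe.mpr h)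
          · intro e₁ he₁ e₂ he₂ hne x hx₁ hx₂
            have key : ∀ f₁, f₁ ∈ insert e M → ∀ f₂, f₂ ∈ insert e M → f₁ ≠ f₂ →
                (f₁ = e ∨ f₂ = e) → ∀ y, y ∈ f₁ → y ∉ f₂ := by
              intro f₁ hf₁ f₂ hf₂ hne₁₂ hor y hy₁ hy₂
              rcases hor with rfl | rfl
              · -- f₁ = e
                rcases Finset.mem_insert.mp hf₂ with rfl | hf₂'
                · exact hne₁₂ rfl
                · by_cases h2 : f₂ = s(v, w)
                  · subst h2
                    rcases Sym2.mem_iff.mp hy₂ with rfl | rfl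
                    · exact hve hy₁
                    · exact hwe hy₁
                  · have : f₂ ∈ insert s(u, w) N :=
                      Finset.mem_insert_of_mem (Finset.mem_erase.mpr ⟨h2, hf₂'⟩)
                    exact hins.2 f₁ (Finset.mem_insert_self _ _) f₂
                      (Finset.mem_insert_of_mem this)
                      (fun h => heM (h ▸ this)) y hy₁ hy₂
              · -- f₂ = e
                rcases Finset.mem_insert.mp hf₁ with rfl | hf₁'
                · exact hne₁₂ rfl
                · by_cases h2 : f₁ = s(v, w)
                  · subst h2
                    rcases Sym2.mem_iff.mp hy₁ with rfl | rfl
                    · exact hve hy₂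
                    · exact hwe hy₂
                  · have : f₁ ∈ insert s(u, w) N :=
                      Finset.mem_insert_of_mem (Finset.mem_erase.mpr ⟨h2, hf₁'⟩)
                    exact hins.2 f₁ (Finset.mem_insert_of_mem this) f₂
                      (Finset.mem_insert_self _ _)
                      (fun h => heM (h.symm ▸ this)) y hy₁ hy₂
            rcases Finset.mem_insert.mp he₁ with rfl | he₁'
            · exact key e₁ he₁ e₂ he₂ hne (Or.inl rfl) x hx₁ hx₂
            · rcases Finset.mem_insert.mp he₂ with rfl | he₂'
              · exact key e₁ he₁ e₂ he₂ hne (Or.inr rfl) x hx₁ hx₂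
              · exact hM.1.2 e₁ he₁' e₂ he₂' hne x hx₁ hx₂
        · -- card
          have h1 : M.card ≥ 1 := Finset.card_pos.mpr ⟨_, hvwM⟩
          rw [Finset.card_insert_of_notMem huwN, hN, Finset.card_erase_of_mem hvwM]
          omega
        · intro e he
          rcases Finset.mem_insert.mp he with rfl | he2
          · intro hmem
            rcases Sym2.mem_iff.mp hmem with h | h
            · exact huv h.symm
            · exact hvnw h
          · exact hvN e he2
      · refine ⟨M, hM, rfl, ?_⟩
        intro e he hve
        obtain ⟨b, rfl⟩ := Sym2.mem_iff_exists.mp hve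
        have hb : b = w := hvnbr b ((SimpleGraph.mem_edgeSet G).mp (hM.1.1 he))
        exact hvwM (hb ▸ he)
    -- pull M₂ back to G'
    have hrange : ∀ e ∈ M₂, ∃ e' : Sym2 ↥s, F e' = e := by
      intro e he
      induction e using Sym2.ind with
      | _ a b =>
      have hna : a ∈ s := by
        simp only [hs, Set.mem_compl_iff, Set.mem_singleton_iff]
        exact fun h => hM₂v _ he (by rw [h]; simp)
      have hnb : b ∈ s := by
        simp only [hs, Set.mem_compl_iff, Set.mem_singleton_iff]
        exact fun h => hM₂v _ he (by rw [h]; simp)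
      exact ⟨s(⟨a, hna⟩, ⟨b, hnb⟩), by simp [hF, Sym2.map_pair_eq]⟩
    set M' : Finset (Sym2 ↥s) := Finset.preimage M₂ F hFinj.injOn with hM'def
    have himg : M'.image F = M₂ := by
      apply Finset.ext
      intro e
      constructor
      · intro he
        obtain ⟨e', he', rfl⟩ := Finset.mem_image.mp he
        exact Finset.mem_preimage.mp he'
      · intro he
        obtain ⟨e', rfl⟩ := hrange e he
        exact Finset.mem_image_of_mem F (Finset.mem_preimage.mpr he)
    have hM'card : M'.card = M₂.card := by
      rw [← himg, Finset.card_image_of_injective _ hFinj]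
    have hM'max : IsMaximalMatching G' M' := by
      refine ⟨(hmatch_iff M').mpr (himg ▸ hM₂max.1), ?_⟩
      intro h hhE hhM' hins
      have hFh : F h ∈ G.edgeSet := (hedge h).mp hhE
      have hFhM : F h ∉ M₂ := fun hc => hhM' (Finset.mem_preimage.mpr hc)
      apply hM₂max.2 (F h) hFh hFhM
      have := (hmatch_iff _).mp hins
      rwa [Finset.image_insert, himg] at this
    exact Nat.sInf_le ⟨M', hM'max, by rw [hM'card, hM₂card, hcard]; rfl⟩
  exact le_antisymm h2 h1

end MatchingPaper
end

section
/- Let a, b, c be integers with a ≥ 1, b ≥ 0 and c ≥ 1, and let G = G^{(3)}_{a,b,c} be the graph described below. Then |V(G)| = 2a + 2b + c + 2, ind-match(G) = b + 2, and min-match(G) = match(G) = a + b + 1. -/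
namespace MatchingPaper

variable {V : Type*}

/-- The graph `G^{(3)}_{a,b,c}` : a complete graph on `X = {x_1, …, x_{2a}}`
(first summand), edges `{y_i, y_{b+i}}` for `1 ≤ i ≤ b` (`Y` is the second
summand, a disjoint union of `b` edges), a vertex `v` (fourth summand,
`Sum.inr (Sum.inr (Sum.inr (Sum.inl ())))`) joined to every `z_i`
(`Z` is the third summand), and a vertex `w` (last summand) joined to every
vertex of `X ∪ Y ∪ {v}`. Vertices are 0-indexed. -/
def G3 (a b c : ℕ) : SimpleGraph (Fin (2 * a) ⊕ Fin (2 * b) ⊕ Fin c ⊕ Unit ⊕ Unit) :=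
  SimpleGraph.fromRel fun p q =>
    match p, q with
    | Sum.inl i, Sum.inl j => i ≠ j
    | Sum.inr (Sum.inl i), Sum.inr (Sum.inl j) => (i : ℕ) < b ∧ (j : ℕ) = (i : ℕ) + b
    | Sum.inr (Sum.inr (Sum.inr (Sum.inl _))), Sum.inr (Sum.inr (Sum.inl _)) => True
    | Sum.inr (Sum.inr (Sum.inr (Sum.inr _))), Sum.inl _ => True
    | Sum.inr (Sum.inr (Sum.inr (Sum.inr _))), Sum.inr (Sum.inl _) => True
    | Sum.inr (Sum.inr (Sum.inr (Sum.inr _))), Sum.inr (Sum.inr (Sum.inr (Sum.inl _))) => True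
    | _, _ => False

section Aux
variable {a b c : ℕ}

abbrev Vt (a b c : ℕ) := Fin (2 * a) ⊕ Fin (2 * b) ⊕ Fin c ⊕ Unit ⊕ Unit
abbrev xV (i : Fin (2*a)) : Vt a b c := Sum.inl i
abbrev yV (i : Fin (2*b)) : Vt a b c := Sum.inr (Sum.inl i)
abbrev zV (k : Fin c) : Vt a b c := Sum.inr (Sum.inr (Sum.inl k))
abbrev vv : Vt a b c := Sum.inr (Sum.inr (Sum.inr (Sum.inl ())))
abbrev ww : Vt a b c := Sum.inr (Sum.inr (Sum.inr (Sum.inr ())))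

lemma adj_xx {i j : Fin (2*a)} (h : i ≠ j) : (G3 a b c).Adj (xV i) (xV j) := by
  simp [G3, SimpleGraph.fromRel_adj, h]
lemma adj_yy {i j : Fin (2*b)} (h1 : (i:ℕ) < b) (h2 : (j:ℕ) = i + b) :
    (G3 a b c).Adj (yV i) (yV j) := by
  have : i ≠ j := by intro h; rw [h] at h2; omega
  simp [G3, SimpleGraph.fromRel_adj, this] <;> omega
lemma adj_vz (k : Fin c) : (G3 a b c).Adj vv (zV k) := by
  simp [G3, SimpleGraph.fromRel_adj]
lemma adj_wx (i : Fin (2*a)) : (G3 a b c).Adj ww (xV i) := by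
  simp [G3, SimpleGraph.fromRel_adj]
lemma adj_wy (i : Fin (2*b)) : (G3 a b c).Adj ww (yV i) := by
  simp [G3, SimpleGraph.fromRel_adj]
lemma adj_wv : (G3 a b c).Adj ww vv := by
  simp [G3, SimpleGraph.fromRel_adj]

def XE (a b c : ℕ) (i : Fin a) : Sym2 (Vt a b c) :=
  s(xV ⟨2*i, by have := i.isLt; omega⟩, xV ⟨2*i+1, by have := i.isLt; omega⟩)
def YE (a b c : ℕ) (i : Fin b) : Sym2 (Vt a b c) :=
  s(yV ⟨i, by have := i.isLt; omega⟩, yV ⟨i+b, by have := i.isLt; omega⟩)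
def VE (a b c : ℕ) (hc : 1 ≤ c) : Sym2 (Vt a b c) := s(vv, zV ⟨0, hc⟩)

lemma XE_mem_edgeSet (i : Fin a) : XE a b c i ∈ (G3 a b c).edgeSet :=
  adj_xx (by simp [Fin.ext_iff])
lemma YE_mem_edgeSet (i : Fin b) : YE a b c i ∈ (G3 a b c).edgeSet :=
  adj_yy (by simpa using i.isLt) (by simp)
lemma VE_mem_edgeSet (hc : 1 ≤ c) : VE a b c hc ∈ (G3 a b c).edgeSet := adj_vz _

def Mmax (a b c : ℕ) (hc : 1 ≤ c) : Finset (Sym2 (Vt a b c)) :=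
  (Finset.univ.image (XE a b c)) ∪ (Finset.univ.image (YE a b c)) ∪ {VE a b c hc}

lemma mem_Mmax_iff {hc : 1 ≤ c} {e : Sym2 (Vt a b c)} :
    e ∈ Mmax a b c hc ↔ (∃ i, e = XE a b c i) ∨ (∃ i, e = YE a b c i) ∨ e = VE a b c hc := by
  simp [Mmax, eq_comm, or_assoc]
  tauto

lemma mem_XE_iff {p : Vt a b c} {i : Fin a} :
    p ∈ XE a b c i ↔ (∃ j : Fin (2*a), p = xV j ∧ ((j:ℕ) = 2*i ∨ (j:ℕ) = 2*i+1)) := by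
  constructor
  · intro h
    rw [XE, Sym2.mem_iff] at h
    rcases h with h | h
    · exact ⟨_, h, Or.inl rfl⟩
    · exact ⟨_, h, Or.inr rfl⟩
  · rintro ⟨j, rfl, h | h⟩ <;> rw [XE, Sym2.mem_iff]
    · left; simp [Fin.ext_iff, h]
    · right; simp [Fin.ext_iff, h]

lemma mem_YE_iff {p : Vt a b c} {i : Fin b} :
    p ∈ YE a b c i ↔ (∃ j : Fin (2*b), p = yV j ∧ ((j:ℕ) = i ∨ (j:ℕ) = i + b)) := by
  constructor
  · intro h
    rw [YE, Sym2.mem_iff] at h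
    rcases h with h | h
    · exact ⟨_, h, Or.inl rfl⟩
    · exact ⟨_, h, Or.inr rfl⟩
  · rintro ⟨j, rfl, h | h⟩ <;> rw [YE, Sym2.mem_iff]
    · left; simp [Fin.ext_iff, h]
    · right; simp [Fin.ext_iff, h]

lemma mem_VE_iff {p : Vt a b c} {hc : 1 ≤ c} :
    p ∈ VE a b c hc ↔ p = vv ∨ p = zV ⟨0, hc⟩ := Sym2.mem_iff

lemma Mmax_isMatching (hc : 1 ≤ c) : IsMatching (G3 a b c) (Mmax a b c hc) := by
  constructor
  · intro e he
    rcases mem_Mmax_iff.1 he with ⟨i, rfl⟩ | ⟨i, rfl⟩ | rfl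
    · exact XE_mem_edgeSet i
    · exact YE_mem_edgeSet i
    · exact VE_mem_edgeSet hc
  · intro e he f hf hne p hpe hpf
    rcases mem_Mmax_iff.1 he with ⟨i, rfl⟩ | ⟨i, rfl⟩ | rfl <;>
      rcases mem_Mmax_iff.1 hf with ⟨j, rfl⟩ | ⟨j, rfl⟩ | rfl
    · rcases mem_XE_iff.1 hpe with ⟨s, rfl, hs⟩
      rcases mem_XE_iff.1 hpf with ⟨t, ht, hts⟩
      have hst : (s:ℕ) = t := by simpa [Fin.ext_iff] using ht
      have : i = j := by apply Fin.ext; omega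
      exact hne (by rw [this])
    · rcases mem_XE_iff.1 hpe with ⟨s, rfl, _⟩
      rcases mem_YE_iff.1 hpf with ⟨t, ht, _⟩
      simp at ht
    · rcases mem_XE_iff.1 hpe with ⟨s, rfl, _⟩
      rcases mem_VE_iff.1 hpf with h | h <;> simp at h
    · rcases mem_YE_iff.1 hpe with ⟨s, rfl, _⟩
      rcases mem_XE_iff.1 hpf with ⟨t, ht, _⟩
      simp at ht
    · rcases mem_YE_iff.1 hpe with ⟨s, rfl, hs⟩
      rcases mem_YE_iff.1 hpf with ⟨t, ht, hts⟩
      have hst : (s:ℕ) = t := by simpa [Fin.ext_iff] using ht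
      have hib : (i:ℕ) < b := i.isLt
      have hjb : (j:ℕ) < b := j.isLt
      have : i = j := by apply Fin.ext; omega
      exact hne (by rw [this])
    · rcases mem_YE_iff.1 hpe with ⟨s, rfl, _⟩
      rcases mem_VE_iff.1 hpf with h | h <;> simp at h
    · rcases mem_VE_iff.1 hpe with h | h <;>
        [rcases mem_XE_iff.1 hpf with ⟨t, ht, _⟩; rcases mem_XE_iff.1 hpf with ⟨t, ht, _⟩] <;>
        subst h <;> simp at ht
    · rcases mem_VE_iff.1 hpe with h | h <;>
        [rcases mem_YE_iff.1 hpf with ⟨t, ht, _⟩; rcases mem_YE_iff.1 hpf with ⟨t, ht, _⟩] <;>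
        subst h <;> simp at ht
    · exact hne rfl

lemma XE_inj : Function.Injective (XE a b c) := by
  intro i j h
  rw [XE, XE, Sym2.eq_iff] at h
  apply Fin.ext
  rcases h with ⟨h1, _⟩ | ⟨h1, _⟩ <;> simp [Fin.ext_iff] at h1 <;> omega

lemma YE_inj : Function.Injective (YE a b c) := by
  intro i j h
  rw [YE, YE, Sym2.eq_iff] at h
  apply Fin.ext
  rcases h with ⟨h1, _⟩ | ⟨h1, _⟩ <;> simp [Fin.ext_iff] at h1 <;> omega

lemma XE_ne_YE (i : Fin a) (j : Fin b) : XE a b c i ≠ YE a b c j := by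
  intro h; rw [XE, YE, Sym2.eq_iff] at h; simp at h

lemma XE_ne_VE (i : Fin a) (hc : 1 ≤ c) : XE a b c i ≠ VE a b c hc := by
  intro h; rw [XE, VE, Sym2.eq_iff] at h; simp at h

lemma YE_ne_VE (i : Fin b) (hc : 1 ≤ c) : YE a b c i ≠ VE a b c hc := by
  intro h; rw [YE, VE, Sym2.eq_iff] at h; simp at h

lemma Mmax_card (hc : 1 ≤ c) : (Mmax a b c hc).card = a + b + 1 := by
  rw [Mmax, Finset.card_union_of_disjoint, Finset.card_union_of_disjoint,
    Finset.card_image_of_injective _ XE_inj, Finset.card_image_of_injective _ YE_inj,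
    Finset.card_univ, Finset.card_univ, Finset.card_singleton, Fintype.card_fin,
    Fintype.card_fin]
  · rw [Finset.disjoint_left]
    rintro e he hf
    simp only [Finset.mem_image, Finset.mem_univ, true_and] at he hf
    obtain ⟨i, rfl⟩ := he
    obtain ⟨j, hj⟩ := hf
    exact XE_ne_YE i j hj.symm
  · rw [Finset.disjoint_left]
    rintro e he hf
    simp only [Finset.mem_union, Finset.mem_image, Finset.mem_univ, true_and,
      Finset.mem_singleton] at he hf
    rcases he with ⟨i, rfl⟩ | ⟨i, rfl⟩
    · exact XE_ne_VE i hc hf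
    · exact YE_ne_VE i hc hf

open Classical in
lemma not_matching_insert {W : Type*} {G : SimpleGraph W} {M : Finset (Sym2 W)} {e : Sym2 W}
    (he : e ∉ M) {f : Sym2 W} (hf : f ∈ M) {p : W} (hpe : p ∈ e) (hpf : p ∈ f) :
    ¬ IsMatching G (insert e M) := by
  intro hM
  exact hM.2 e (Finset.mem_insert_self _ _) f (Finset.mem_insert_of_mem hf)
    (fun h => he (h ▸ hf)) p hpe hpf

open Classical in
lemma matching_insert {W : Type*} {G : SimpleGraph W} {M : Finset (Sym2 W)}
    (hM : IsMatching G M) {e : Sym2 W} (he : e ∈ G.edgeSet)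
    (h : ∀ p, p ∈ e → ∀ f ∈ M, p ∉ f) : IsMatching G (insert e M) := by
  constructor
  · rw [Finset.coe_insert]
    exact Set.insert_subset he hM.1
  · intro e1 h1 e2 h2 hne p hp1 hp2
    rcases Finset.mem_insert.1 h1 with h1e | h1m <;> rcases Finset.mem_insert.1 h2 with h2e | h2m
    · exact absurd (h1e.trans h2e.symm) hne
    · exact h p (h1e ▸ hp1) e2 h2m hp2
    · exact h p (h2e ▸ hp2) e1 h1m hp1
    · exact hM.2 e1 h1m e2 h2m hne p hp1 hp2

lemma Mmax_covers_x (hc : 1 ≤ c) (i : Fin (2*a)) : ∃ e ∈ Mmax a b c hc, xV i ∈ e := by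
  refine ⟨XE a b c ⟨(i:ℕ)/2, by have := i.isLt; omega⟩,
    mem_Mmax_iff.2 (Or.inl ⟨_, rfl⟩), ?_⟩
  rw [mem_XE_iff]
  exact ⟨i, rfl, by simp; omega⟩

lemma Mmax_covers_y (hc : 1 ≤ c) (i : Fin (2*b)) : ∃ e ∈ Mmax a b c hc, yV i ∈ e := by
  by_cases h : (i:ℕ) < b
  · refine ⟨YE a b c ⟨(i:ℕ), h⟩, mem_Mmax_iff.2 (Or.inr (Or.inl ⟨_, rfl⟩)), ?_⟩
    rw [mem_YE_iff]
    exact ⟨i, rfl, by simp⟩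
  · have hb : (i:ℕ) - b < b := by have := i.isLt; omega
    refine ⟨YE a b c ⟨(i:ℕ) - b, hb⟩, mem_Mmax_iff.2 (Or.inr (Or.inl ⟨_, rfl⟩)), ?_⟩
    rw [mem_YE_iff]
    exact ⟨i, rfl, by simp; omega⟩

lemma Mmax_covers_v (hc : 1 ≤ c) : ∃ e ∈ Mmax a b c hc, (vv : Vt a b c) ∈ e :=
  ⟨VE a b c hc, mem_Mmax_iff.2 (Or.inr (Or.inr rfl)), mem_VE_iff.2 (Or.inl rfl)⟩

lemma edge_cases {e : Sym2 (Vt a b c)} (he : e ∈ (G3 a b c).edgeSet) :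
    (∃ i j : Fin (2*a), i ≠ j ∧ e = s(xV i, xV j)) ∨
    (∃ i j : Fin (2*b), (i:ℕ) < b ∧ (j:ℕ) = i + b ∧ e = s(yV i, yV j)) ∨
    (∃ k : Fin c, e = s(vv, zV k)) ∨
    (∃ i : Fin (2*a), e = s(ww, xV i)) ∨
    (∃ i : Fin (2*b), e = s(ww, yV i)) ∨
    e = s(ww, (vv : Vt a b c)) := by
  induction e with
  | _ p q =>
    rw [SimpleGraph.mem_edgeSet] at he
    rcases p with i | i | k | ⟨⟩ | ⟨⟩ <;> rcases q with j | j | l | ⟨⟩ | ⟨⟩ <;>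
      simp only [G3, SimpleGraph.fromRel_adj, ne_eq] at he
    · exact Or.inl ⟨i, j, by tauto, rfl⟩
    · exact absurd he (by tauto)
    · exact absurd he (by tauto)
    · exact absurd he (by tauto)
    · exact Or.inr (Or.inr (Or.inr (Or.inl ⟨i, Sym2.eq_swap⟩)))
    · exact absurd he (by tauto)
    · rcases he.2 with h | h
      · exact Or.inr (Or.inl ⟨i, j, h.1, h.2, rfl⟩)
      · exact Or.inr (Or.inl ⟨j, i, h.1, h.2, Sym2.eq_swap⟩)
    · exact absurd he (by tauto)
    · exact absurd he (by tauto)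
    · exact Or.inr (Or.inr (Or.inr (Or.inr (Or.inl ⟨i, Sym2.eq_swap⟩))))
    · exact absurd he (by tauto)
    · exact absurd he (by tauto)
    · exact absurd he (by tauto)
    · exact Or.inr (Or.inr (Or.inl ⟨k, Sym2.eq_swap⟩))
    · exact absurd he (by tauto)
    · exact absurd he (by tauto)
    · exact absurd he (by tauto)
    · exact Or.inr (Or.inr (Or.inl ⟨l, rfl⟩))
    · exact absurd he (by tauto)
    · exact Or.inr (Or.inr (Or.inr (Or.inr (Or.inr Sym2.eq_swap))))
    · exact Or.inr (Or.inr (Or.inr (Or.inl ⟨j, rfl⟩)))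
    · exact Or.inr (Or.inr (Or.inr (Or.inr (Or.inl ⟨j, rfl⟩))))
    · exact absurd he (by tauto)
    · exact Or.inr (Or.inr (Or.inr (Or.inr (Or.inr rfl))))
    · exact absurd he (by tauto)
lemma Mmax_isMaximal (hc : 1 ≤ c) : IsMaximalMatching (G3 a b c) (Mmax a b c hc) := by
  refine ⟨Mmax_isMatching hc, ?_⟩
  intro e he hem hins
  rcases edge_cases he with ⟨i, j, hij, rfl⟩ | ⟨i, j, hib, hj, rfl⟩ | ⟨k, rfl⟩ |
    ⟨i, rfl⟩ | ⟨i, rfl⟩ | rfl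
  · obtain ⟨f, hf, hpf⟩ := Mmax_covers_x hc i
    exact not_matching_insert hem hf (Sym2.mem_mk_left _ _) hpf hins
  · obtain ⟨f, hf, hpf⟩ := Mmax_covers_y hc i
    exact not_matching_insert hem hf (Sym2.mem_mk_left _ _) hpf hins
  · obtain ⟨f, hf, hpf⟩ := Mmax_covers_v hc
    exact not_matching_insert hem hf (Sym2.mem_mk_left _ _) hpf hins
  · obtain ⟨f, hf, hpf⟩ := Mmax_covers_x hc i
    exact not_matching_insert hem hf (Sym2.mem_mk_right _ _) hpf hins
  · obtain ⟨f, hf, hpf⟩ := Mmax_covers_y hc i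
    exact not_matching_insert hem hf (Sym2.mem_mk_right _ _) hpf hins
  · obtain ⟨f, hf, hpf⟩ := Mmax_covers_v hc
    exact not_matching_insert hem hf (Sym2.mem_mk_right _ _) hpf hins

def notZ : Vt a b c → Bool
  | Sum.inr (Sum.inr (Sum.inl _)) => false
  | _ => true

def Sfin (a b c : ℕ) : Finset (Vt a b c) := Finset.univ.filter (fun p => notZ p)

lemma Sfin_card : (Sfin a b c).card = 2*a + 2*b + 2 := by
  rw [Sfin, Finset.card_filter, Fintype.sum_sum_type]
  rw [Fintype.sum_sum_type, Fintype.sum_sum_type, Fintype.sum_sum_type]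
  simp [notZ]
  omega

lemma matching_card_le {M : Finset (Sym2 (Vt a b c))} (hM : IsMatching (G3 a b c) M) :
    M.card ≤ a + b + 1 := by
  classical
  set W : Sym2 (Vt a b c) → ℕ := fun e => ((Sfin a b c).filter (· ∈ e)).card with hW
  have hdisj : ∀ e ∈ M, ∀ f ∈ M, e ≠ f →
      Disjoint ((Sfin a b c).filter (· ∈ e)) ((Sfin a b c).filter (· ∈ f)) := by
    intro e he f hf hne
    rw [Finset.disjoint_left]
    intro p hp hq
    exact hM.2 e he f hf hne p (Finset.mem_filter.1 hp).2 (Finset.mem_filter.1 hq).2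
  have hsum : ∑ e ∈ M, W e ≤ (Sfin a b c).card := by
    rw [hW, ← Finset.card_biUnion hdisj]
    refine Finset.card_le_card ?_
    intro p hp
    rcases Finset.mem_biUnion.1 hp with ⟨e, _, hpe⟩
    exact (Finset.mem_filter.1 hpe).1
  have h2 : ∀ e ∈ M, vv ∉ e → 2 ≤ W e := by
    intro e he hv
    have hsub : ∀ p q : Vt a b c, p ∈ e → q ∈ e → p ≠ q → notZ p → notZ q → 2 ≤ W e := by
      intro p q hp hq hpq hnp hnq
      have : ({p, q} : Finset (Vt a b c)) ⊆ (Sfin a b c).filter (· ∈ e) := by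
        intro r hr
        rcases Finset.mem_insert.1 hr with rfl | hr
        · exact Finset.mem_filter.2 ⟨by simp [Sfin, hnp], hp⟩
        · rw [Finset.mem_singleton] at hr; subst hr
          exact Finset.mem_filter.2 ⟨by simp [Sfin, hnq], hq⟩
      calc 2 = ({p, q} : Finset (Vt a b c)).card := (Finset.card_pair hpq).symm
        _ ≤ W e := Finset.card_le_card this
    rcases edge_cases (hM.1 he) with ⟨i, j, hij, rfl⟩ | ⟨i, j, hib, hj, rfl⟩ | ⟨k, rfl⟩ |
      ⟨i, rfl⟩ | ⟨i, rfl⟩ | rfl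
    · exact hsub _ _ (Sym2.mem_mk_left _ _) (Sym2.mem_mk_right _ _) (by simp [hij]) rfl rfl
    · refine hsub _ _ (Sym2.mem_mk_left _ _) (Sym2.mem_mk_right _ _) ?_ rfl rfl
      simp only [ne_eq, Sum.inr.injEq, Sum.inl.injEq]
      intro h; rw [h] at hj; omega
    · exact absurd (Sym2.mem_mk_left _ _) hv
    · exact hsub _ _ (Sym2.mem_mk_left _ _) (Sym2.mem_mk_right _ _) (by simp) rfl rfl
    · exact hsub _ _ (Sym2.mem_mk_left _ _) (Sym2.mem_mk_right _ _) (by simp) rfl rfl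
    · exact absurd (Sym2.mem_mk_right _ _) hv
  have h1 : ∀ e ∈ M, vv ∈ e → 1 ≤ W e := by
    intro e _ hv
    exact Finset.card_pos.2 ⟨vv, Finset.mem_filter.2 ⟨(show vv ∈ Sfin a b c from Finset.mem_filter.2 ⟨Finset.mem_univ _, rfl⟩), hv⟩⟩
  have hM1 : (M.filter (fun e => vv ∈ e)).card ≤ 1 := by
    rw [Finset.card_le_one]
    intro e he f hf
    by_contra hne
    exact hM.2 e (Finset.mem_filter.1 he).1 f (Finset.mem_filter.1 hf).1 hne vv
      (Finset.mem_filter.1 he).2 (Finset.mem_filter.1 hf).2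
  have hsplit := Finset.sum_filter_add_sum_filter_not M (fun e => vv ∈ e) W
  have hlow1 : (M.filter (fun e => vv ∈ e)).card * 1 ≤
      ∑ e ∈ M.filter (fun e => vv ∈ e), W e := by
    simpa using Finset.card_nsmul_le_sum _ _ _
      (fun e he => h1 e (Finset.mem_filter.1 he).1 (Finset.mem_filter.1 he).2)
  have hlow2 : (M.filter (fun e => ¬ vv ∈ e)).card * 2 ≤
      ∑ e ∈ M.filter (fun e => ¬ vv ∈ e), W e := by
    simpa using Finset.card_nsmul_le_sum _ _ _
      (fun e he => h2 e (Finset.mem_filter.1 he).1 (Finset.mem_filter.1 he).2)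
  have hcard := Finset.card_filter_add_card_filter_not (s := M) (p := fun e => vv ∈ e)
  have hS := Sfin_card (a := a) (b := b) (c := c)
  omega

lemma empty_isMatching : IsMatching (G3 a b c) (∅ : Finset (Sym2 (Vt a b c))) := by
  constructor
  · simp
  · simp

lemma matchNum_G3 (hc : 1 ≤ c) : matchNum (G3 a b c) = a + b + 1 := by
  apply le_antisymm
  · refine csSup_le ⟨0, ⟨∅, empty_isMatching, by simp⟩⟩ ?_
    rintro n ⟨M, hM, rfl⟩
    exact matching_card_le hM
  · apply le_csSup
    · refine ⟨a + b + 1, ?_⟩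
      rintro n ⟨M, hM, rfl⟩
      exact matching_card_le hM
    · exact ⟨Mmax a b c hc, Mmax_isMatching hc, Mmax_card hc⟩


lemma maximal_card_ge {M : Finset (Sym2 (Vt a b c))} (hc : 1 ≤ c)
    (hM : IsMaximalMatching (G3 a b c) M) : a + b + 1 ≤ M.card := by
  classical
  obtain ⟨hmat, hmax⟩ := hM
  -- v is matched
  have hv : ∃ e ∈ M, (vv : Vt a b c) ∈ e := by
    by_contra hnv
    push_neg at hnv
    have hz : ∀ e ∈ M, (zV ⟨0, hc⟩ : Vt a b c) ∉ e := by
      intro e he hze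
      rcases edge_cases (hmat.1 he) with ⟨i, j, _, rfl⟩ | ⟨i, j, _, _, rfl⟩ | ⟨k, rfl⟩ |
        ⟨i, rfl⟩ | ⟨i, rfl⟩ | rfl
      · simp [Sym2.mem_iff] at hze
      · simp [Sym2.mem_iff] at hze
      · exact hnv _ he (Sym2.mem_mk_left _ _)
      · simp [Sym2.mem_iff] at hze
      · simp [Sym2.mem_iff] at hze
      · simp [Sym2.mem_iff] at hze
    refine hmax s(vv, zV ⟨0, hc⟩) (adj_vz _) (fun h => hnv _ h (Sym2.mem_mk_left _ _)) ?_
    refine matching_insert hmat (adj_vz _) ?_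
    intro p hp f hf
    rcases Sym2.mem_iff.1 hp with rfl | rfl
    · exact hnv f hf
    · exact hz f hf
  -- every Y pair is covered
  have hy : ∀ i : ℕ, i < b →
      ∃ e ∈ M, ∃ j : Fin (2*b), yV j ∈ e ∧ ((j:ℕ) = i ∨ (j:ℕ) = i + b) := by
    intro i hi
    by_contra hny
    push_neg at hny
    have hilt : i < 2*b := by omega
    have hilt2 : i + b < 2*b := by omega
    have hadj : (G3 a b c).Adj (yV ⟨i, hilt⟩) (yV ⟨i+b, hilt2⟩) := adj_yy hi rfl
    have hp : ∀ f ∈ M, (yV ⟨i, hilt⟩ : Vt a b c) ∉ f := by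
      intro f hf hmem
      exact (hny f hf ⟨i, hilt⟩ hmem).1 rfl
    have hq : ∀ f ∈ M, (yV ⟨i+b, hilt2⟩ : Vt a b c) ∉ f := by
      intro f hf hmem
      exact (hny f hf ⟨i+b, hilt2⟩ hmem).2 rfl
    refine hmax s(yV ⟨i, hilt⟩, yV ⟨i+b, hilt2⟩) hadj
      (fun h => hp _ h (Sym2.mem_mk_left _ _)) ?_
    refine matching_insert hmat hadj ?_
    intro p hpm f hf
    rcases Sym2.mem_iff.1 hpm with rfl | rfl
    · exact hp f hf
    · exact hq f hf
  -- at most one X vertex is unmatched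
  have hx : ∀ i j : Fin (2*a), i ≠ j → (∀ e ∈ M, xV i ∉ e) → (∀ e ∈ M, xV j ∉ e) → False := by
    intro i j hij hiu hju
    refine hmax s(xV i, xV j) (adj_xx hij) (fun h => hiu _ h (Sym2.mem_mk_left _ _)) ?_
    refine matching_insert hmat (adj_xx hij) ?_
    intro p hp f hf
    rcases Sym2.mem_iff.1 hp with rfl | rfl
    · exact hiu f hf
    · exact hju f hf
  set MX := M.filter (fun e => ∃ i : Fin (2*a), xV i ∈ e) with hMX
  set MY := M.filter (fun e => ∃ i : Fin (2*b), yV i ∈ e) with hMYdef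
  set MV := M.filter (fun e => (vv : Vt a b c) ∈ e) with hMV
  -- disjointness
  have dXY : Disjoint MX MY := by
    rw [Finset.disjoint_left]
    intro e heX heY
    obtain ⟨he, i0, hx0⟩ := Finset.mem_filter.1 heX
    obtain ⟨_, j0, hy0⟩ := Finset.mem_filter.1 heY
    rcases edge_cases (hmat.1 he) with ⟨i, j, _, rfl⟩ | ⟨i, j, _, _, rfl⟩ | ⟨k, rfl⟩ |
      ⟨i, rfl⟩ | ⟨i, rfl⟩ | rfl <;> simp [Sym2.mem_iff] at hx0 hy0
  have dXV : Disjoint MX MV := by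
    rw [Finset.disjoint_left]
    intro e heX heV
    obtain ⟨he, i0, hx0⟩ := Finset.mem_filter.1 heX
    obtain ⟨_, hv0⟩ := Finset.mem_filter.1 heV
    rcases edge_cases (hmat.1 he) with ⟨i, j, _, rfl⟩ | ⟨i, j, _, _, rfl⟩ | ⟨k, rfl⟩ |
      ⟨i, rfl⟩ | ⟨i, rfl⟩ | rfl <;> simp [Sym2.mem_iff] at hx0 hv0
  have dYV : Disjoint MY MV := by
    rw [Finset.disjoint_left]
    intro e heY heV
    obtain ⟨he, j0, hy0⟩ := Finset.mem_filter.1 heY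
    obtain ⟨_, hv0⟩ := Finset.mem_filter.1 heV
    rcases edge_cases (hmat.1 he) with ⟨i, j, _, rfl⟩ | ⟨i, j, _, _, rfl⟩ | ⟨k, rfl⟩ |
      ⟨i, rfl⟩ | ⟨i, rfl⟩ | rfl <;> simp [Sym2.mem_iff] at hy0 hv0
  -- card MV ≥ 1
  have hcV : 1 ≤ MV.card := by
    obtain ⟨e, he, hve⟩ := hv
    exact Finset.card_pos.2 ⟨e, Finset.mem_filter.2 ⟨he, hve⟩⟩
  -- card MY ≥ b
  have hcY : b ≤ MY.card := by
    set F : ℕ → Sym2 (Vt a b c) := fun i =>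
      if h : i < b then (hy i h).choose else s(vv, vv) with hF
    have hFmem : ∀ i ∈ Finset.range b, F i ∈ MY := by
      intro i hi
      rw [Finset.mem_range] at hi
      rw [hF]
      simp only [hi, dif_pos]
      obtain ⟨he, j, hj, _⟩ := (hy i hi).choose_spec
      exact Finset.mem_filter.2 ⟨he, j, hj⟩
    have hFinj : Set.InjOn F (Finset.range b) := by
      intro i1 h1 i2 h2 heq
      rw [Finset.coe_range, Set.mem_Iio] at h1 h2
      rw [hF] at heq
      simp only [h1, h2, dif_pos] at heq
      obtain ⟨he1, j1, hj1, hv1⟩ := (hy i1 h1).choose_spec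
      obtain ⟨he2, j2, hj2, hv2⟩ := (hy i2 h2).choose_spec
      rw [heq] at hj1
      rcases edge_cases (hmat.1 he2) with ⟨i, j, _, hsh⟩ | ⟨i, j, hib, hjv, hsh⟩ |
        ⟨k, hsh⟩ | ⟨i, hsh⟩ | ⟨i, hsh⟩ | hsh <;> rw [hsh] at hj1 hj2 <;>
        simp [Sym2.mem_iff, Fin.ext_iff] at hj1 hj2 <;> omega
    calc b = (Finset.range b).card := (Finset.card_range b).symm
      _ ≤ MY.card := Finset.card_le_card_of_injOn F hFmem hFinj
  -- card MX ≥ a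
  have hcX : a ≤ MX.card := by
    set XM := (Finset.univ : Finset (Fin (2*a))).filter (fun i => ∃ e ∈ M, xV i ∈ e) with hXMdef
    have hXM : 2*a - 1 ≤ XM.card := by
      have hneg : ((Finset.univ : Finset (Fin (2*a))).filter
          (fun i => ¬ ∃ e ∈ M, xV i ∈ e)).card ≤ 1 := by
        rw [Finset.card_le_one]
        intro i hi j hj
        by_contra hij
        obtain ⟨_, hi'⟩ := Finset.mem_filter.1 hi
        obtain ⟨_, hj'⟩ := Finset.mem_filter.1 hj
        push_neg at hi' hj'
        exact hx i j hij hi' hj'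
      have htot := Finset.card_filter_add_card_filter_not
        (s := (Finset.univ : Finset (Fin (2*a)))) (p := fun i => ∃ e ∈ M, xV i ∈ e)
      rw [Finset.card_univ, Fintype.card_fin] at htot
      rw [← hXMdef] at htot
      omega
    have hcover : XM ⊆ MX.biUnion
        (fun e => Finset.univ.filter (fun i : Fin (2*a) => xV i ∈ e)) := by
      intro i hi
      obtain ⟨_, e, he, hxe⟩ := Finset.mem_filter.1 hi
      exact Finset.mem_biUnion.2 ⟨e, Finset.mem_filter.2 ⟨he, i, hxe⟩,
        Finset.mem_filter.2 ⟨Finset.mem_univ _, hxe⟩⟩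
    have hbound : ∀ e ∈ MX,
        ((Finset.univ : Finset (Fin (2*a))).filter (fun i => xV i ∈ e)).card ≤ 2 := by
      intro e _
      induction e with
      | _ p q =>
        have hsub : (Finset.univ : Finset (Fin (2*a))).filter (fun i => xV i ∈ s(p, q)) ⊆
            ((Finset.univ : Finset (Fin (2*a))).filter (fun i => (xV i : Vt a b c) = p)) ∪
            ((Finset.univ : Finset (Fin (2*a))).filter (fun i => (xV i : Vt a b c) = q)) := by
          intro i hi
          obtain ⟨_, hi'⟩ := Finset.mem_filter.1 hi
          rcases Sym2.mem_iff.1 hi' with h | h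
          · exact Finset.mem_union_left _ (Finset.mem_filter.2 ⟨Finset.mem_univ _, h⟩)
          · exact Finset.mem_union_right _ (Finset.mem_filter.2 ⟨Finset.mem_univ _, h⟩)
        have h1 : ((Finset.univ : Finset (Fin (2*a))).filter
            (fun i => (xV i : Vt a b c) = p)).card ≤ 1 := by
          rw [Finset.card_le_one]
          intro i hi j hj
          have hi' := (Finset.mem_filter.1 hi).2
          have hj' := (Finset.mem_filter.1 hj).2
          have : (xV i : Vt a b c) = xV j := hi'.trans hj'.symm
          exact Sum.inl_injective this
        have h2 : ((Finset.univ : Finset (Fin (2*a))).filter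
            (fun i => (xV i : Vt a b c) = q)).card ≤ 1 := by
          rw [Finset.card_le_one]
          intro i hi j hj
          have hi' := (Finset.mem_filter.1 hi).2
          have hj' := (Finset.mem_filter.1 hj).2
          have : (xV i : Vt a b c) = xV j := hi'.trans hj'.symm
          exact Sum.inl_injective this
        calc ((Finset.univ : Finset (Fin (2*a))).filter (fun i => xV i ∈ s(p, q))).card
            ≤ _ := Finset.card_le_card hsub
          _ ≤ _ := Finset.card_union_le _ _
          _ ≤ 2 := by omega
    have hchain : XM.card ≤ 2 * MX.card := by
      calc XM.card ≤ (MX.biUnion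
            (fun e => Finset.univ.filter (fun i : Fin (2*a) => xV i ∈ e))).card :=
            Finset.card_le_card hcover
        _ ≤ ∑ e ∈ MX, ((Finset.univ : Finset (Fin (2*a))).filter
              (fun i => xV i ∈ e)).card := Finset.card_biUnion_le
        _ ≤ MX.card * 2 := by
            simpa using Finset.sum_le_card_nsmul _ _ 2 hbound
        _ = 2 * MX.card := by ring
    omega
  -- combine
  have hsub : MX ∪ MY ∪ MV ⊆ M := by
    intro e he
    rcases Finset.mem_union.1 he with he | he
    · rcases Finset.mem_union.1 he with he | he
      · exact (Finset.mem_filter.1 he).1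
      · exact (Finset.mem_filter.1 he).1
    · exact (Finset.mem_filter.1 he).1
  have hcard : MX.card + MY.card + MV.card ≤ M.card := by
    calc MX.card + MY.card + MV.card = (MX ∪ MY ∪ MV).card := by
          rw [Finset.card_union_of_disjoint (Finset.disjoint_union_left.2 ⟨dXV, dYV⟩),
            Finset.card_union_of_disjoint dXY]
      _ ≤ M.card := Finset.card_le_card hsub
  omega

lemma minMatchNum_G3 (hc : 1 ≤ c) : minMatchNum (G3 a b c) = a + b + 1 := by
  apply le_antisymm
  · exact Nat.sInf_le ⟨Mmax a b c hc, Mmax_isMaximal hc, Mmax_card hc⟩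
  · refine le_csInf ⟨a + b + 1, ⟨Mmax a b c hc, Mmax_isMaximal hc, Mmax_card hc⟩⟩ ?_
    rintro n ⟨M, hM, rfl⟩
    exact maximal_card_ge hc hM


lemma matching_mono {W : Type*} {G : SimpleGraph W} {M N : Finset (Sym2 W)}
    (hNM : N ⊆ M) (hM : IsMatching G M) : IsMatching G N :=
  ⟨fun e he => hM.1 (hNM (by exact_mod_cast he)),
   fun e he f hf hne => hM.2 e (hNM he) f (hNM hf) hne⟩

lemma nadj_xy (i : Fin (2*a)) (j : Fin (2*b)) : ¬ (G3 a b c).Adj (xV i) (yV j) := by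
  simp [G3, SimpleGraph.fromRel_adj]
lemma nadj_xv (i : Fin (2*a)) : ¬ (G3 a b c).Adj (xV i) (vv : Vt a b c) := by
  simp [G3, SimpleGraph.fromRel_adj]
lemma nadj_xz (i : Fin (2*a)) (k : Fin c) : ¬ (G3 a b c).Adj (xV i) (zV k) := by
  simp [G3, SimpleGraph.fromRel_adj]
lemma nadj_yv (j : Fin (2*b)) : ¬ (G3 a b c).Adj (yV j) (vv : Vt a b c) := by
  simp [G3, SimpleGraph.fromRel_adj]
lemma nadj_yz (j : Fin (2*b)) (k : Fin c) : ¬ (G3 a b c).Adj (yV j) (zV k) := by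
  simp [G3, SimpleGraph.fromRel_adj]
lemma adj_yy_iff {s t : Fin (2*b)} (h : (G3 a b c).Adj (yV s) (yV t)) :
    ((s:ℕ) < b ∧ (t:ℕ) = s + b) ∨ ((t:ℕ) < b ∧ (s:ℕ) = t + b) := by
  rw [G3, SimpleGraph.fromRel_adj] at h
  exact h.2

def Mind (a b c : ℕ) (ha : 1 ≤ a) (hc : 1 ≤ c) : Finset (Sym2 (Vt a b c)) :=
  insert (XE a b c ⟨0, ha⟩) ((Finset.univ.image (YE a b c)) ∪ {VE a b c hc})

lemma mem_Mind_iff {ha : 1 ≤ a} {hc : 1 ≤ c} {e : Sym2 (Vt a b c)} :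
    e ∈ Mind a b c ha hc ↔
      e = XE a b c ⟨0, ha⟩ ∨ (∃ i, e = YE a b c i) ∨ e = VE a b c hc := by
  simp [Mind, eq_comm, or_assoc]
  tauto

lemma Mind_subset_Mmax {ha : 1 ≤ a} {hc : 1 ≤ c} :
    Mind a b c ha hc ⊆ Mmax a b c hc := by
  intro e he
  rcases mem_Mind_iff.1 he with rfl | ⟨i, rfl⟩ | rfl
  · exact mem_Mmax_iff.2 (Or.inl ⟨_, rfl⟩)
  · exact mem_Mmax_iff.2 (Or.inr (Or.inl ⟨_, rfl⟩))
  · exact mem_Mmax_iff.2 (Or.inr (Or.inr rfl))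

lemma Mind_card (ha : 1 ≤ a) (hc : 1 ≤ c) : (Mind a b c ha hc).card = b + 2 := by
  rw [Mind, Finset.card_insert_of_notMem, Finset.card_union_of_disjoint,
    Finset.card_image_of_injective _ YE_inj, Finset.card_univ, Fintype.card_fin,
    Finset.card_singleton]
  · rw [Finset.disjoint_left]
    rintro e he hf
    simp only [Finset.mem_image, Finset.mem_univ, true_and] at he
    obtain ⟨i, rfl⟩ := he
    rw [Finset.mem_singleton] at hf
    exact YE_ne_VE i hc hf
  · intro h
    rcases Finset.mem_union.1 h with h | h
    · simp only [Finset.mem_image, Finset.mem_univ, true_and] at h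
      obtain ⟨i, hi⟩ := h
      exact XE_ne_YE _ i hi.symm
    · rw [Finset.mem_singleton] at h
      exact XE_ne_VE _ hc h

lemma Mind_isInduced (ha : 1 ≤ a) (hc : 1 ≤ c) :
    IsInducedMatching (G3 a b c) (Mind a b c ha hc) := by
  have hmat : IsMatching (G3 a b c) (Mind a b c ha hc) :=
    matching_mono Mind_subset_Mmax (Mmax_isMatching hc)
  refine ⟨hmat, ?_⟩
  rintro e he f hf hne g hg ⟨u, hug, hue⟩ ⟨u', hu'g, hu'f⟩
  -- u ≠ u'
  have huu : u ≠ u' := by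
    rintro rfl
    exact hmat.2 e he f hf hne u hue hu'f
  -- g joins u and u', so u and u' are adjacent
  have hadj : (G3 a b c).Adj u u' := by
    induction g with
    | _ p q =>
      rw [SimpleGraph.mem_edgeSet] at hg
      rcases Sym2.mem_iff.1 hug with rfl | rfl <;> rcases Sym2.mem_iff.1 hu'g with rfl | rfl
      · exact absurd rfl huu
      · exact hg
      · exact hg.symm
      · exact absurd rfl huu
  clear hug hu'g huu hg
  rcases mem_Mind_iff.1 he with rfl | ⟨i, rfl⟩ | rfl <;>
    rcases mem_Mind_iff.1 hf with rfl | ⟨j, rfl⟩ | rfl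
  · exact hne rfl
  · obtain ⟨s, rfl, _⟩ := mem_XE_iff.1 hue
    obtain ⟨t, rfl, _⟩ := mem_YE_iff.1 hu'f
    exact nadj_xy s t hadj
  · obtain ⟨s, rfl, _⟩ := mem_XE_iff.1 hue
    rcases mem_VE_iff.1 hu'f with rfl | rfl
    · exact nadj_xv s hadj
    · exact nadj_xz s _ hadj
  · obtain ⟨s, rfl, _⟩ := mem_YE_iff.1 hue
    obtain ⟨t, rfl, _⟩ := mem_XE_iff.1 hu'f
    exact nadj_xy t s hadj.symm
  · obtain ⟨s, rfl, hs⟩ := mem_YE_iff.1 hue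
    obtain ⟨t, rfl, ht⟩ := mem_YE_iff.1 hu'f
    have hij : (i:ℕ) ≠ (j:ℕ) := by
      intro h
      exact hne (congrArg _ (Fin.ext h))
    have hib : (i:ℕ) < b := i.isLt
    have hjb : (j:ℕ) < b := j.isLt
    rcases adj_yy_iff hadj with ⟨h1, h2⟩ | ⟨h1, h2⟩ <;> omega
  · obtain ⟨s, rfl, _⟩ := mem_YE_iff.1 hue
    rcases mem_VE_iff.1 hu'f with rfl | rfl
    · exact nadj_yv s hadj
    · exact nadj_yz s _ hadj
  · obtain ⟨t, rfl, _⟩ := mem_XE_iff.1 hu'f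
    rcases mem_VE_iff.1 hue with rfl | rfl
    · exact nadj_xv t hadj.symm
    · exact nadj_xz t _ hadj.symm
  · obtain ⟨t, rfl, _⟩ := mem_YE_iff.1 hu'f
    rcases mem_VE_iff.1 hue with rfl | rfl
    · exact nadj_yv t hadj.symm
    · exact nadj_yz t _ hadj.symm
  · exact hne rfl

def pVW : Sym2 (Vt a b c) → Prop := fun e => (vv : Vt a b c) ∈ e ∨ (ww : Vt a b c) ∈ e
def pY : Sym2 (Vt a b c) → Prop := fun e => (∃ i : Fin (2*b), yV i ∈ e) ∧ ¬ pVW e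
def pX : Sym2 (Vt a b c) → Prop := fun e => (∃ i : Fin (2*a), xV i ∈ e) ∧ ¬ pVW e
instance : DecidablePred (pVW (a := a) (b := b) (c := c)) := fun e => by
  unfold pVW; infer_instance
instance : DecidablePred (pY (a := a) (b := b) (c := c)) := fun e => by
  unfold pY; infer_instance
instance : DecidablePred (pX (a := a) (b := b) (c := c)) := fun e => by
  unfold pX; infer_instance

lemma induced_card_le {M : Finset (Sym2 (Vt a b c))}
    (hInd : IsInducedMatching (G3 a b c) M) : M.card ≤ b + 2 := by
  obtain ⟨hmat, hind⟩ := hInd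
  set Q3 := M.filter pVW with hQ3
  set Q2 := M.filter pY with hQ2
  set Q1 := M.filter pX with hQ1
  have hcov : M ⊆ Q1 ∪ Q2 ∪ Q3 := by
    intro e he
    rcases edge_cases (hmat.1 he) with ⟨i, j, hij, rfl⟩ | ⟨i, j, hib, hj, rfl⟩ | ⟨k, rfl⟩ |
      ⟨i, rfl⟩ | ⟨i, rfl⟩ | rfl
    · refine Finset.mem_union_left _ (Finset.mem_union_left _ (Finset.mem_filter.2
        ⟨he, ⟨i, Sym2.mem_mk_left _ _⟩, ?_⟩))
      simp [pVW, Sym2.mem_iff]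
    · refine Finset.mem_union_left _ (Finset.mem_union_right _ (Finset.mem_filter.2
        ⟨he, ⟨i, Sym2.mem_mk_left _ _⟩, ?_⟩))
      simp [pVW, Sym2.mem_iff]
    · exact Finset.mem_union_right _ (Finset.mem_filter.2
        ⟨he, Or.inl (Sym2.mem_mk_left _ _)⟩)
    · exact Finset.mem_union_right _ (Finset.mem_filter.2
        ⟨he, Or.inr (Sym2.mem_mk_left _ _)⟩)
    · exact Finset.mem_union_right _ (Finset.mem_filter.2
        ⟨he, Or.inr (Sym2.mem_mk_left _ _)⟩)
    · exact Finset.mem_union_right _ (Finset.mem_filter.2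
        ⟨he, Or.inr (Sym2.mem_mk_left _ _)⟩)
  have h3 : Q3.card ≤ 1 := by
    rw [Finset.card_le_one]
    intro e he f hf
    by_contra hne
    obtain ⟨heM, hevw⟩ := Finset.mem_filter.1 he
    obtain ⟨hfM, hfvw⟩ := Finset.mem_filter.1 hf
    have hg : s(vv, ww) ∈ (G3 a b c).edgeSet := (SimpleGraph.mem_edgeSet _).2 adj_wv.symm
    refine hind e heM f hfM hne s(vv, ww) hg ?_ ?_
    · rcases hevw with h | h
      · exact ⟨vv, Sym2.mem_mk_left _ _, h⟩
      · exact ⟨ww, Sym2.mem_mk_right _ _, h⟩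
    · rcases hfvw with h | h
      · exact ⟨vv, Sym2.mem_mk_left _ _, h⟩
      · exact ⟨ww, Sym2.mem_mk_right _ _, h⟩
  have h2 : Q2.card ≤ b := by
    have hsub : Q2 ⊆ Finset.univ.image (YE a b c) := by
      intro e he
      obtain ⟨heM, ⟨i0, hy0⟩, hnvw⟩ := Finset.mem_filter.1 he
      rcases edge_cases (hmat.1 heM) with ⟨i, j, hij, rfl⟩ | ⟨i, j, hib, hj, rfl⟩ |
        ⟨k, rfl⟩ | ⟨i, rfl⟩ | ⟨i, rfl⟩ | rfl
      · simp [Sym2.mem_iff] at hy0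
      · refine Finset.mem_image.2 ⟨⟨(i:ℕ), hib⟩, Finset.mem_univ _, ?_⟩
        rw [YE, Sym2.eq_iff]
        left
        constructor <;> simp [Fin.ext_iff] <;> omega
      · exact absurd (Or.inl (Sym2.mem_mk_left _ _)) hnvw
      · exact absurd (Or.inr (Sym2.mem_mk_left _ _)) hnvw
      · exact absurd (Or.inr (Sym2.mem_mk_left _ _)) hnvw
      · exact absurd (Or.inr (Sym2.mem_mk_left _ _)) hnvw
    calc Q2.card ≤ (Finset.univ.image (YE a b c)).card := Finset.card_le_card hsub
      _ ≤ (Finset.univ : Finset (Fin b)).card := Finset.card_image_le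
      _ = b := by rw [Finset.card_univ, Fintype.card_fin]
  have h1 : Q1.card ≤ 1 := by
    rw [Finset.card_le_one]
    intro e he f hf
    by_contra hne
    obtain ⟨heM, ⟨i0, hx0⟩, hnvw⟩ := Finset.mem_filter.1 he
    obtain ⟨hfM, ⟨j0, hx1⟩, hnvw'⟩ := Finset.mem_filter.1 hf
    -- both are X-X edges
    have heshape : ∃ p q : Fin (2*a), p ≠ q ∧ e = s(xV p, xV q) := by
      rcases edge_cases (hmat.1 heM) with ⟨i, j, hij, rfl⟩ | ⟨i, j, hib, hj, rfl⟩ |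
        ⟨k, rfl⟩ | ⟨i, rfl⟩ | ⟨i, rfl⟩ | rfl
      · exact ⟨i, j, hij, rfl⟩
      · simp [Sym2.mem_iff] at hx0
      · exact absurd (Or.inl (Sym2.mem_mk_left _ _)) hnvw
      · exact absurd (Or.inr (Sym2.mem_mk_left _ _)) hnvw
      · exact absurd (Or.inr (Sym2.mem_mk_left _ _)) hnvw
      · exact absurd (Or.inr (Sym2.mem_mk_left _ _)) hnvw
    have hfshape : ∃ p q : Fin (2*a), p ≠ q ∧ f = s(xV p, xV q) := by
      rcases edge_cases (hmat.1 hfM) with ⟨i, j, hij, rfl⟩ | ⟨i, j, hib, hj, rfl⟩ |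
        ⟨k, rfl⟩ | ⟨i, rfl⟩ | ⟨i, rfl⟩ | rfl
      · exact ⟨i, j, hij, rfl⟩
      · simp [Sym2.mem_iff] at hx1
      · exact absurd (Or.inl (Sym2.mem_mk_left _ _)) hnvw'
      · exact absurd (Or.inr (Sym2.mem_mk_left _ _)) hnvw'
      · exact absurd (Or.inr (Sym2.mem_mk_left _ _)) hnvw'
      · exact absurd (Or.inr (Sym2.mem_mk_left _ _)) hnvw'
    obtain ⟨p1, q1, hpq1, rfl⟩ := heshape
    obtain ⟨p2, q2, hpq2, rfl⟩ := hfshape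
    have hp12 : p1 ≠ p2 := by
      rintro rfl
      exact hmat.2 _ heM _ hfM hne (xV p1) (Sym2.mem_mk_left _ _) (Sym2.mem_mk_left _ _)
    have hg : s(xV p1, xV p2) ∈ (G3 a b c).edgeSet :=
      (SimpleGraph.mem_edgeSet _).2 (adj_xx hp12)
    exact hind _ heM _ hfM hne s(xV p1, xV p2) hg
      ⟨xV p1, Sym2.mem_mk_left _ _, Sym2.mem_mk_left _ _⟩
      ⟨xV p2, Sym2.mem_mk_right _ _, Sym2.mem_mk_left _ _⟩
  calc M.card ≤ (Q1 ∪ Q2 ∪ Q3).card := Finset.card_le_card hcov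
    _ ≤ (Q1 ∪ Q2).card + Q3.card := Finset.card_union_le _ _
    _ ≤ Q1.card + Q2.card + Q3.card := by
        have := Finset.card_union_le Q1 Q2
        omega
    _ ≤ b + 2 := by omega

lemma indMatchNum_G3 (ha : 1 ≤ a) (hc : 1 ≤ c) : indMatchNum (G3 a b c) = b + 2 := by
  apply le_antisymm
  · refine csSup_le ⟨0, ⟨∅, ⟨empty_isMatching, by simp⟩, by simp⟩⟩ ?_
    rintro n ⟨M, hM, rfl⟩
    exact induced_card_le hM
  · apply le_csSup
    · refine ⟨b + 2, ?_⟩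
      rintro n ⟨M, hM, rfl⟩
      exact induced_card_le hM
    · exact ⟨Mind a b c ha hc, Mind_isInduced ha hc, Mind_card ha hc⟩


end Aux

theorem G3_invariants (a b c : ℕ) (ha : 1 ≤ a) (hc : 1 ≤ c) :
    Fintype.card (Fin (2 * a) ⊕ Fin (2 * b) ⊕ Fin c ⊕ Unit ⊕ Unit) = 2 * a + 2 * b + c + 2 ∧
      indMatchNum (G3 a b c) = b + 2 ∧
      minMatchNum (G3 a b c) = a + b + 1 ∧
      matchNum (G3 a b c) = a + b + 1 := by
  refine ⟨?_, indMatchNum_G3 ha hc, minMatchNum_G3 hc, matchNum_G3 hc⟩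
  simp [Fintype.card_sum]
  omega

end MatchingPaper
end
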